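/- If 𝓔 : A → A is a positive trace-preserving linear map satisfying the Schwarz inequality 𝓔(x)*𝓔(x) ≤ 𝓔(x*x) for all x, then 𝓔 is unital: 𝓔(1) = 1. -/

import Mathlib

open scoped ComplexOrder

/-- a positive trace-preserving Schwarz map on a unital C*-algebra with a
faithful trace is unital. -/
theorem schwarz_channel_unital {A : Type*}
    [CStarAlgebra A] [PartialOrder A] [StarOrderedRing A]
    (τ : A →ₗ[ℂ] ℂ)
    (hpos : ∀ a : A, 0 ≤ a → 0 ≤ τ a)
    (hfaith : ∀ a : A, 0 ≤ a → τ a = 0 → a = 0)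
    (htracial : ∀ x y : A, τ (x * y) = τ (y * x))
    (E : A →ₗ[ℂ] A)
    (hEpos : ∀ a : A, 0 ≤ a → 0 ≤ E a)
    (hEtrace : ∀ x : A, τ (E x) = τ x)
    (hSchwarz : ∀ x : A, star (E x) * E x ≤ E (star x * x)) :
    E 1 = 1 := by
  set p : A := E 1 with hp_def
  have hp : 0 ≤ p := hEpos 1 zero_le_one
  have hps : star p = p := (IsSelfAdjoint.of_nonneg hp)
  have hp2 : p * p ≤ p := by
    have := hSchwarz 1
    simp only [star_one, mul_one] at this
    rw [← hp_def, hps] at this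
    exact this
  -- ‖p‖ ≤ 1
  have hpp_nonneg : 0 ≤ p * p := by
    simpa [hps] using star_mul_self_nonneg p
  have hnorm_sq : ‖p‖ ^ 2 ≤ ‖p‖ := by
    have h1 : ‖p * p‖ ≤ ‖p‖ := CStarAlgebra.norm_le_norm_of_nonneg_of_le hpp_nonneg hp2
    calc ‖p‖ ^ 2 = ‖star p * p‖ := by rw [CStarRing.norm_star_mul_self, sq]
      _ = ‖p * p‖ := by rw [hps]
      _ ≤ ‖p‖ := h1
  have hnorm : ‖p‖ ≤ 1 := by
    rcases eq_or_lt_of_le (norm_nonneg p) with h | h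
    · linarith
    · nlinarith
  have hple : p ≤ 1 := (CStarAlgebra.norm_le_one_iff_of_nonneg p hp).mp hnorm
  have hone_sub : 0 ≤ 1 - p := sub_nonneg.mpr hple
  have hτ : τ (1 - p) = 0 := by
    have := hEtrace 1
    rw [map_sub]
    rw [hp_def] at *
    rw [this]
    ring
  have h := hfaith (1 - p) hone_sub hτ
  exact (sub_eq_zero.mp h).symm
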